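/- Let Π be a finite collection of pairwise-compatible Γ-Whitehead partitions (each with a chosen base). Then any consistent choice of sides for a subset of Π can be extended to a region, i.e. to a consistent choice of sides for all of Π. -/

import Mathlib

variable {V : Type*}

/-- The star of a vertex: the vertex together with its neighbors. -/
def gstar (Γ : SimpleGraph V) (v : V) : Set V :=
  insert v (Γ.neighborSet v)

/-- A Γ-Whitehead partition based at the vertex `m`: a partition of
`V± = V × Bool` (where `(v, true)` is `v⁺` and `(v, false)` is `v⁻`) into the
two sides `plus`, `minus` and the part `lk(m)± = {x | x.1 ∈ lk(m)}`, such that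
each side has at least two elements, `m⁺ ∈ plus`, `m⁻ ∈ minus`, and any two
distinct vertices in the same connected component of the subgraph of `Γ`
induced on `V ∖ st(m)` have all four of their elements in the same side. -/
structure GWPartition [Fintype V] (Γ : SimpleGraph V) (m : V) where
  plus : Set (V × Bool)
  minus : Set (V × Bool)
  disjoint_sides : Disjoint plus minus
  union_sides : plus ∪ minus = {x : V × Bool | x.1 ∉ Γ.neighborSet m}
  thick_plus : 2 ≤ plus.ncard
  thick_minus : 2 ≤ minus.ncard
  base_plus : (m, true) ∈ plus
  base_minus : (m, false) ∈ minus
  component_const :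
    ∀ a b : ({x : V | x ∉ gstar Γ m} : Set V), (a : V) ≠ (b : V) →
      (Γ.induce {x : V | x ∉ gstar Γ m}).Reachable a b →
      (({((a : V), true), ((a : V), false), ((b : V), true), ((b : V), false)} :
          Set (V × Bool)) ⊆ plus ∨
        ({((a : V), true), ((a : V), false), ((b : V), true), ((b : V), false)} :
          Set (V × Bool)) ⊆ minus)

variable [Fintype V] {Γ : SimpleGraph V} {m : V}

/-- `P` splits the vertex `v` if `v⁺` and `v⁻` lie in different sides of `P`. -/
def GWPartition.Splits (P : GWPartition Γ m) (v : V) : Prop :=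
  ((v, true) ∈ P.plus ∧ (v, false) ∈ P.minus) ∨
    ((v, true) ∈ P.minus ∧ (v, false) ∈ P.plus)

/-- The set `Sing(P)` of vertices split by `P`. -/
def GWPartition.sing (P : GWPartition Γ m) : Set V := {v | P.Splits v}

/-- `max(P)`: the set of vertices split by `P` that are maximal in `Sing(P)`
with respect to the relation `v ≤ u ↔ lk(v) ⊆ st(u)`. -/
def GWPartition.maxSet (P : GWPartition Γ m) : Set V :=
  {v | P.Splits v ∧ ∀ u, P.Splits u →
    Γ.neighborSet v ⊆ gstar Γ u → Γ.neighborSet u ⊆ gstar Γ v}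

/-- Two Γ-Whitehead partitions based at `m` and `m'` commute if `m ≠ m'` and
`m` is adjacent to `m'`. -/
def GWCommutes (Γ : SimpleGraph V) (m m' : V) : Prop := m ≠ m' ∧ Γ.Adj m m'

/-- `S` is a side of the Γ-Whitehead partition `P`. -/
def GWPartition.IsSide (P : GWPartition Γ m) (S : Set (V × Bool)) : Prop :=
  S = P.plus ∨ S = P.minus

/-- Two Γ-Whitehead partitions are compatible if they commute or they have
disjoint sides. -/
def GWCompatible {m m' : V} (P : GWPartition Γ m) (Q : GWPartition Γ m') : Prop :=
  GWCommutes Γ m m' ∨ ∃ S T, P.IsSide S ∧ Q.IsSide T ∧ S ∩ T = ∅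

lemma GWPartition.IsSide.base_mem {P : GWPartition Γ m} {B : Set (V × Bool)}
    (h : P.IsSide B) : ∃ b, (m, b) ∈ B := by
  rcases h with rfl | rfl
  · exact ⟨true, P.base_plus⟩
  · exact ⟨false, P.base_minus⟩

lemma GWPartition.IsSide.not_lk {P : GWPartition Γ m} {B : Set (V × Bool)}
    (h : P.IsSide B) {x : V × Bool} (hx : x ∈ B) : x.1 ∉ Γ.neighborSet m := by
  have hmem : x ∈ P.plus ∪ P.minus := by
    rcases h with rfl | rfl
    · exact Or.inl hx
    · exact Or.inr hx
  rw [P.union_sides] at hmem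
  exact hmem

lemma gwcommutes_symm {m m' : V} (h : GWCommutes Γ m m') : GWCommutes Γ m' m :=
  ⟨h.1.symm, h.2.symm⟩

/-- Key lemma: if `Q` does not commute with `P` and a side `B` of `Q` is
disjoint from the side `A` of `P`, then `B` is contained in the other side
`A'` of `P`. -/
lemma gw_key {m m' : V} (P : GWPartition Γ m) (Q : GWPartition Γ m')
    (hnc : ¬ GWCommutes Γ m m') {B A A' : Set (V × Bool)}
    (hB : Q.IsSide B)
    (hAA' : (A = P.plus ∧ A' = P.minus) ∨ (A = P.minus ∧ A' = P.plus))
    (hd : B ∩ A = ∅) : B ⊆ A' := by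
  have hU : A ∪ A' = {x : V × Bool | x.1 ∉ Γ.neighborSet m} := by
    rcases hAA' with ⟨rfl, rfl⟩ | ⟨rfl, rfl⟩
    · exact P.union_sides
    · rw [Set.union_comm]; exact P.union_sides
  have hbA : ∃ b, (m, b) ∈ A := by
    rcases hAA' with ⟨rfl, _⟩ | ⟨rfl, _⟩
    · exact ⟨true, P.base_plus⟩
    · exact ⟨false, P.base_minus⟩
  have hCC : ∀ a b : ({x : V | x ∉ gstar Γ m'} : Set V), (a : V) ≠ (b : V) →
      (Γ.induce {x : V | x ∉ gstar Γ m'}).Reachable a b →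
      (({((a : V), true), ((a : V), false), ((b : V), true), ((b : V), false)} :
          Set (V × Bool)) ⊆ Q.plus ∨
        ({((a : V), true), ((a : V), false), ((b : V), true), ((b : V), false)} :
          Set (V × Bool)) ⊆ Q.minus) := Q.component_const
  intro x hx
  have hxA : x ∉ A := fun h => (Set.eq_empty_iff_forall_notMem.mp hd x) ⟨hx, h⟩
  have hx1 : x.1 ∉ Γ.neighborSet m' := hB.not_lk hx
  by_cases hxm : x.1 ∈ Γ.neighborSet m
  · -- the "bad" case: x.1 ∈ lk(m); derive a contradiction
    exfalso
    rcases eq_or_ne m m' with rfl | hne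
    · exact hx1 hxm
    · have hadj : ¬ Γ.Adj m m' := fun h => hnc ⟨hne, h⟩
      have hm : m ∈ {y : V | y ∉ gstar Γ m'} := by
        simp only [Set.mem_setOf_eq, gstar, Set.mem_insert_iff,
          SimpleGraph.mem_neighborSet, not_or]
        exact ⟨hne, fun h => hadj h.symm⟩
      have hAdjmx : Γ.Adj m x.1 := hxm
      have hx1ne : x.1 ≠ m' := by
        rintro h
        rw [h] at hAdjmx
        exact hadj hAdjmx
      have hxs : x.1 ∈ {y : V | y ∉ gstar Γ m'} := by
        simp only [Set.mem_setOf_eq, gstar, Set.mem_insert_iff,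
          SimpleGraph.mem_neighborSet, not_or]
        exact ⟨hx1ne, hx1⟩
      have hx1nm : x.1 ≠ m := fun h => Γ.irrefl (h ▸ hAdjmx)
      have hreach : (Γ.induce {y : V | y ∉ gstar Γ m'}).Reachable ⟨x.1, hxs⟩ ⟨m, hm⟩ :=
        SimpleGraph.Adj.reachable (by simpa using hAdjmx.symm)
      obtain ⟨bA, hbA⟩ := hbA
      have h4 := hCC ⟨x.1, hxs⟩ ⟨m, hm⟩ (by simpa using hx1nm) hreach
      -- x and (m, bA) end up in the same side of Q
      have hxmem : ∀ T : Set (V × Bool),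
          ({(x.1, true), (x.1, false), (m, true), (m, false)} : Set (V × Bool)) ⊆ T →
          x ∈ T ∧ (m, bA) ∈ T := by
        intro T hT
        constructor
        · apply hT
          rcases Bool.eq_false_or_eq_true x.2 with h2 | h2 <;>
            · have : x = (x.1, x.2) := rfl
              rw [this, h2]; simp
        · apply hT; rcases Bool.eq_false_or_eq_true bA with h2 | h2 <;> (rw [h2]; simp)
      have hmbB : (m, bA) ∈ B := by
        rcases h4 with h4 | h4
        · obtain ⟨hxT, hmT⟩ := hxmem _ h4
          rcases hB with rfl | rfl
          · exact hmT
          · exact absurd hx (Set.disjoint_left.mp Q.disjoint_sides hxT)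
        · obtain ⟨hxT, hmT⟩ := hxmem _ h4
          rcases hB with rfl | rfl
          · exact absurd hxT (Set.disjoint_left.mp Q.disjoint_sides hx)
          · exact hmT
      exact (Set.eq_empty_iff_forall_notMem.mp hd (m, bA)) ⟨hmbB, hbA⟩
  · -- x.1 ∉ lk(m): then x ∈ A ∪ A', and x ∉ A, so x ∈ A'
    have : x ∈ A ∪ A' := by rw [hU]; exact hxm
    rcases this with h | h
    · exact absurd h hxA
    · exact h

/-- One-step extension: a side of `P i` can be chosen consistently with
any given consistent choice on `S`, for `i ∉ S`. -/
lemma gw_ext_one {ι : Type*} (base : ι → V)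
    (P : (i : ι) → GWPartition Γ (base i))
    (S : Set ι) (σ : ι → Set (V × Bool))
    (hside : ∀ i ∈ S, (P i).IsSide (σ i))
    (hcons : ∀ i ∈ S, ∀ j ∈ S, i ≠ j →
      GWCommutes Γ (base i) (base j) ∨ (σ i ∩ σ j).Nonempty)
    (i : ι) (hi : i ∉ S) :
    ∃ B, (P i).IsSide B ∧ ∀ j ∈ S,
      GWCommutes Γ (base j) (base i) ∨ (σ j ∩ B).Nonempty := by
  by_contra hcon
  push_neg at hcon
  obtain ⟨j1, hj1, hnc1, hd1⟩ := hcon (P i).plus (Or.inl rfl)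
  obtain ⟨j2, hj2, hnc2, hd2⟩ := hcon (P i).minus (Or.inr rfl)
  have h1 : σ j1 ⊆ (P i).minus :=
    gw_key (P i) (P j1) (fun h => hnc1 (gwcommutes_symm h)) (hside j1 hj1)
      (Or.inl ⟨rfl, rfl⟩) hd1
  have h2 : σ j2 ⊆ (P i).plus :=
    gw_key (P i) (P j2) (fun h => hnc2 (gwcommutes_symm h)) (hside j2 hj2)
      (Or.inr ⟨rfl, rfl⟩) hd2
  rcases eq_or_ne j1 j2 with rfl | hne12
  · obtain ⟨b, hb⟩ := (hside j1 hj1).base_mem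
    exact Set.disjoint_left.mp (P i).disjoint_sides (h2 hb) (h1 hb)
  · have hnc12 : ¬ GWCommutes Γ (base j1) (base j2) := by
      rintro ⟨hneb, hadjb⟩
      rcases eq_or_ne (base j1) (base i) with he1 | he1
      · -- base j1 = base i; then base j2 ≠ base i, so ¬Adj (base j2) (base i)
        have he2 : base j2 ≠ base i := fun h => hneb (he1.trans h.symm)
        have : ¬ Γ.Adj (base j2) (base i) := fun h => hnc2 ⟨he2, h⟩
        exact this (he1 ▸ hadjb.symm)
      · have hna1 : ¬ Γ.Adj (base j1) (base i) := fun h => hnc1 ⟨he1, h⟩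
        rcases eq_or_ne (base j2) (base i) with he2 | he2
        · exact hna1 (he2 ▸ hadjb)
        · have hna2 : ¬ Γ.Adj (base j2) (base i) := fun h => hnc2 ⟨he2, h⟩
          -- both base j1, base j2 avoid st(base i), and are adjacent:
          -- by component_const they lie in the same side of P i, contradiction
          have hm1 : base j1 ∈ {y : V | y ∉ gstar Γ (base i)} := by
            simp only [Set.mem_setOf_eq, gstar, Set.mem_insert_iff,
              SimpleGraph.mem_neighborSet, not_or]
            exact ⟨he1, fun h => hna1 h.symm⟩
          have hm2 : base j2 ∈ {y : V | y ∉ gstar Γ (base i)} := by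
            simp only [Set.mem_setOf_eq, gstar, Set.mem_insert_iff,
              SimpleGraph.mem_neighborSet, not_or]
            exact ⟨he2, fun h => hna2 h.symm⟩
          have hreach : (Γ.induce {y : V | y ∉ gstar Γ (base i)}).Reachable
              ⟨base j1, hm1⟩ ⟨base j2, hm2⟩ :=
            SimpleGraph.Adj.reachable (by simpa using hadjb)
          obtain ⟨b1, hb1⟩ := (hside j1 hj1).base_mem
          obtain ⟨b2, hb2⟩ := (hside j2 hj2).base_mem
          have hb1' : (base j1, b1) ∈ (P i).minus := h1 hb1
          have hb2' : (base j2, b2) ∈ (P i).plus := h2 hb2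
          have h4 := (P i).component_const ⟨base j1, hm1⟩ ⟨base j2, hm2⟩
            (by simpa using hneb) hreach
          have hmem1 : ∀ T : Set (V × Bool),
              ({(base j1, true), (base j1, false), (base j2, true), (base j2, false)} :
                Set (V × Bool)) ⊆ T → (base j1, b1) ∈ T ∧ (base j2, b2) ∈ T := by
            intro T hT
            constructor
            · apply hT; rcases Bool.eq_false_or_eq_true b1 with h | h <;> (rw [h]; simp)
            · apply hT; rcases Bool.eq_false_or_eq_true b2 with h | h <;> (rw [h]; simp)
          rcases h4 with h4 | h4
          · obtain ⟨hT1, _⟩ := hmem1 _ h4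
            exact Set.disjoint_left.mp (P i).disjoint_sides hT1 hb1'
          · obtain ⟨_, hT2⟩ := hmem1 _ h4
            exact Set.disjoint_left.mp (P i).disjoint_sides hb2' hT2
    rcases hcons j1 hj1 j2 hj2 hne12 with hc | ⟨x, hx1, hx2⟩
    · exact hnc12 hc
    · exact Set.disjoint_left.mp (P i).disjoint_sides (h2 hx2) (h1 hx1)

/-- Induction step: extend a consistent choice on `S` to all of `ι`,
by induction on the cardinality of the complement of `S`. -/
lemma gw_aux {ι : Type*} [Fintype ι] (base : ι → V)
    (P : (i : ι) → GWPartition Γ (base i)) :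
    ∀ (n : ℕ) (S : Set ι) (σ : ι → Set (V × Bool)),
      Sᶜ.ncard ≤ n →
      (∀ i ∈ S, (P i).IsSide (σ i)) →
      (∀ i ∈ S, ∀ j ∈ S, i ≠ j →
        GWCommutes Γ (base i) (base j) ∨ (σ i ∩ σ j).Nonempty) →
      ∃ σ' : ι → Set (V × Bool),
        (∀ i ∈ S, σ' i = σ i) ∧
        (∀ i, (P i).IsSide (σ' i)) ∧
        (∀ i j, i ≠ j →
          GWCommutes Γ (base i) (base j) ∨ (σ' i ∩ σ' j).Nonempty) := by
  intro n
  induction n with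
  | zero =>
    intro S σ hn hside hcons
    have hS : S = Set.univ := by
      have : Sᶜ.ncard = 0 := Nat.le_zero.mp hn
      rw [Set.ncard_eq_zero (Set.toFinite _)] at this
      rw [← Set.compl_empty_iff]; exact this
    subst hS
    exact ⟨σ, fun i _ => rfl, fun i => hside i trivial,
      fun i j hij => hcons i trivial j trivial hij⟩
  | succ n ih =>
    intro S σ hn hside hcons
    by_cases hS : S = Set.univ
    · subst hS
      exact ⟨σ, fun i _ => rfl, fun i => hside i trivial,
        fun i j hij => hcons i trivial j trivial hij⟩
    · obtain ⟨i, hi⟩ := Set.nonempty_compl.mpr hS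
      obtain ⟨B, hBside, hBcons⟩ := gw_ext_one base P S σ hside hcons i hi
      classical
      set σ₁ : ι → Set (V × Bool) := Function.update σ i B with hσ₁
      have hupd_i : σ₁ i = B := Function.update_self i B σ
      have hupd : ∀ j, j ≠ i → σ₁ j = σ j := fun j hj => Function.update_of_ne hj B σ
      have hn₁ : (insert i S)ᶜ.ncard ≤ n := by
        have hci : (insert i S)ᶜ = Sᶜ \ {i} := by ext x; simp [and_comm]
        rw [hci]
        have h1 : (Sᶜ \ {i}).ncard = Sᶜ.ncard - 1 :=
          Set.ncard_diff_singleton_of_mem hi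
        have h2 : 0 < Sᶜ.ncard := (Set.ncard_pos (Set.toFinite _)).mpr ⟨i, hi⟩
        omega
      have hside₁ : ∀ j ∈ insert i S, (P j).IsSide (σ₁ j) := by
        intro j hj
        rcases eq_or_ne j i with rfl | hji
        · rw [hupd_i]; exact hBside
        · rw [hupd j hji]
          exact hside j (hj.resolve_left hji)
      have hcons₁ : ∀ j ∈ insert i S, ∀ k ∈ insert i S, j ≠ k →
          GWCommutes Γ (base j) (base k) ∨ (σ₁ j ∩ σ₁ k).Nonempty := by
        intro j hj k hk hjk
        rcases eq_or_ne j i with rfl | hji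
        · have hkS : k ∈ S := hk.resolve_left (Ne.symm hjk)
          rw [hupd_i, hupd k (Ne.symm hjk)]
          rcases hBcons k hkS with hc | ⟨x, hx1, hx2⟩
          · exact Or.inl (gwcommutes_symm hc)
          · exact Or.inr ⟨x, hx2, hx1⟩
        · have hjS : j ∈ S := hj.resolve_left hji
          rcases eq_or_ne k i with rfl | hki
          · rw [hupd_i, hupd j hji]
            exact hBcons j hjS
          · rw [hupd j hji, hupd k hki]
            exact hcons j hjS k (hk.resolve_left hki) hjk
      obtain ⟨σ', hext, hside', hcons'⟩ := ih (insert i S) σ₁ hn₁ hside₁ hcons₁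
      refine ⟨σ', fun j hj => ?_, hside', hcons'⟩
      have hji : j ≠ i := fun h => hi (h ▸ hj)
      rw [hext j (Set.mem_insert_of_mem i hj), hupd j hji]

/-- Given a finite collection of pairwise-compatible Γ-Whitehead partitions
(indexed by `ι`, with chosen bases), any consistent choice of sides for the
members indexed by a subset `S` extends to a region, i.e. to a consistent
choice of sides for all members.  Here a choice of sides is consistent if any
two distinct non-commuting members have intersecting chosen sides. -/
theorem stmt_9 {ι : Type*} [Fintype ι] (base : ι → V)
    (P : (i : ι) → GWPartition Γ (base i))
    (hcompat : ∀ i j, i ≠ j → GWCompatible (P i) (P j))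
    (S : Set ι) (σ : ι → Set (V × Bool))
    (hside : ∀ i ∈ S, (P i).IsSide (σ i))
    (hcons : ∀ i ∈ S, ∀ j ∈ S, i ≠ j →
      GWCommutes Γ (base i) (base j) ∨ (σ i ∩ σ j).Nonempty) :
    ∃ σ' : ι → Set (V × Bool),
      (∀ i ∈ S, σ' i = σ i) ∧
      (∀ i, (P i).IsSide (σ' i)) ∧
      (∀ i j, i ≠ j →
        GWCommutes Γ (base i) (base j) ∨ (σ' i ∩ σ' j).Nonempty) := by
  exact gw_aux base P Sᶜ.ncard S σ le_rfl hside hcons
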